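/- With F(k,d) as above (summing exp(−(i₁+⋯+i_{d−1}+k·i_d)/(mN)) over 0 ≤ i₁ < ⋯ < i_d ≤ M), one has the upper bound F(k, d) ≤ exp(−(2k+d−2)(d−1)/(2mN)) / ∏_{j=0}^{d−1} (1 − e^{−(k+j)/(mN)}). -/

import Mathlib

open Finset

/-- F(k,d) = Σ_{0 ≤ i₁ < ⋯ < i_d ≤ M} exp(-(i₁+⋯+i_{d-1}+k·i_d)/(mN)), encoded as a sum
over d-element subsets of {0, …, M} (the linear form equals (Σ i) + (k-1)·max). -/
noncomputable def F (m N M k d : ℕ) : ℝ :=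
  ∑ s ∈ (Finset.range (M + 1)).powersetCard d,
    Real.exp (-((∑ i ∈ s, (i : ℝ)) + ((k : ℝ) - 1) * (s.sup id : ℕ)) / ((m : ℝ) * N))

private def emb1 : ℕ ↪ ℕ := ⟨(· + 1), add_left_injective 1⟩

private lemma sup_add_one (s : Finset ℕ) (hs : s.Nonempty) :
    s.sup (fun x => x + 1) = s.sup id + 1 := by
  induction hs using Finset.Nonempty.cons_induction with
  | singleton a => simp
  | cons a s ha hs ih =>
    simp only [Finset.sup_cons, ih, id]
    omega

private lemma F_nonneg (m N M k d : ℕ) : 0 ≤ F m N M k d :=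
  Finset.sum_nonneg fun _ _ => (Real.exp_pos _).le

private lemma sum_shift (m N M k c : ℕ) (hc : 1 ≤ c) :
    ∑ s ∈ (((Finset.range (M + 1)).map emb1).powersetCard c),
      Real.exp (-((∑ i ∈ s, (i : ℝ)) + ((k : ℝ) - 1) * (s.sup id : ℕ)) / ((m : ℝ) * N)) =
    Real.exp (-((k : ℝ) + c - 1) / ((m : ℝ) * N)) * F m N M k c := by
  rw [Finset.powersetCard_map, Finset.sum_map, F, Finset.mul_sum]
  refine Finset.sum_congr rfl fun s hs => ?_
  rw [Finset.mem_powersetCard] at hs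
  have hne : s.Nonempty := Finset.card_pos.mp (hs.2 ▸ hc)
  have hsum : ∑ i ∈ s.map emb1, (i : ℝ) = (∑ i ∈ s, (i : ℝ)) + c := by
    rw [Finset.sum_map]
    have : ∀ i ∈ s, ((emb1 i : ℕ) : ℝ) = (i : ℝ) + 1 := by
      intro i _; simp [emb1]
    rw [Finset.sum_congr rfl this, Finset.sum_add_distrib]
    simp [hs.2]
  have hsup : (s.map emb1).sup id = s.sup id + 1 := by
    rw [Finset.sup_map]
    have : (id ∘ emb1 : ℕ → ℕ) = fun x => x + 1 := rfl
    rw [this, sup_add_one s hne]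
  rw [RelEmbedding.coe_toEmbedding]
  rw [Finset.mapEmbedding_apply, hsum, hsup, ← Real.exp_add]
  congr 1
  push_cast
  field_simp
  ring

private lemma range_insert (M : ℕ) :
    Finset.range (M + 2) = insert 0 ((Finset.range (M + 1)).map emb1) := by
  ext i
  simp only [Finset.mem_range, Finset.mem_insert, Finset.mem_map, emb1,
    Function.Embedding.coeFn_mk]
  constructor
  · intro h
    rcases Nat.eq_zero_or_pos i with h0 | h0
    · exact Or.inl h0
    · exact Or.inr ⟨i - 1, by omega, by omega⟩
  · rintro (rfl | ⟨a, ha, rfl⟩) <;> omega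

private lemma F_rec (m N M k e : ℕ) :
    F m N (M + 1) k (e + 2) =
      Real.exp (-((k : ℝ) + e) / ((m : ℝ) * N)) * F m N M k (e + 1) +
      Real.exp (-((k : ℝ) + e + 1) / ((m : ℝ) * N)) * F m N M k (e + 2) := by
  have h0 : (0 : ℕ) ∉ (Finset.range (M + 1)).map emb1 := by
    simp [emb1]
  rw [F, range_insert, Finset.powersetCard_succ_insert h0, Finset.sum_union]
  · have h1 : ∑ s ∈ (((Finset.range (M + 1)).map emb1).powersetCard (e + 2)),
        Real.exp (-((∑ i ∈ s, (i : ℝ)) + ((k : ℝ) - 1) * (s.sup id : ℕ)) / ((m : ℝ) * N)) =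
        Real.exp (-((k : ℝ) + e + 1) / ((m : ℝ) * N)) * F m N M k (e + 2) := by
      rw [sum_shift m N M k (e + 2) (by omega)]
      congr 2
      push_cast; ring
    have h2 : ∑ s ∈ ((((Finset.range (M + 1)).map emb1).powersetCard (e + 1)).image (insert 0)),
        Real.exp (-((∑ i ∈ s, (i : ℝ)) + ((k : ℝ) - 1) * (s.sup id : ℕ)) / ((m : ℝ) * N)) =
        Real.exp (-((k : ℝ) + e) / ((m : ℝ) * N)) * F m N M k (e + 1) := by
      rw [Finset.sum_image]
      · have : ∀ s ∈ (((Finset.range (M + 1)).map emb1).powersetCard (e + 1)),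
            Real.exp (-((∑ i ∈ insert 0 s, (i : ℝ)) + ((k : ℝ) - 1) * ((insert 0 s).sup id : ℕ))
              / ((m : ℝ) * N)) =
            Real.exp (-((∑ i ∈ s, (i : ℝ)) + ((k : ℝ) - 1) * (s.sup id : ℕ)) / ((m : ℝ) * N)) := by
          intro s hs
          rw [Finset.mem_powersetCard] at hs
          have h0s : (0 : ℕ) ∉ s := fun h => h0 (hs.1 h)
          rw [Finset.sum_insert h0s, Finset.sup_insert]
          norm_num
        rw [Finset.sum_congr rfl this, sum_shift m N M k (e + 1) (by omega)]
        congr 2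
        push_cast; ring
      · intro s1 hs1 s2 hs2 hins
        rw [Finset.mem_coe, Finset.mem_powersetCard] at hs1 hs2
        have h01 : (0 : ℕ) ∉ s1 := fun h => h0 (hs1.1 h)
        have h02 : (0 : ℕ) ∉ s2 := fun h => h0 (hs2.1 h)
        have := congrArg (Finset.erase · 0) hins
        simpa [Finset.erase_insert h01, Finset.erase_insert h02] using this
    rw [h1, h2]
    ring
  · rw [Finset.disjoint_left]
    intro s hs hs'
    rw [Finset.mem_powersetCard] at hs
    rw [Finset.mem_image] at hs'
    obtain ⟨t, _, rfl⟩ := hs'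
    exact h0 (hs.1 (Finset.mem_insert_self 0 t))

private lemma geom_bound (r : ℝ) (hr0 : 0 ≤ r) (hr1 : r < 1) (n : ℕ) :
    ∑ i ∈ Finset.range n, r ^ i ≤ 1 / (1 - r) := by
  have h1 : 0 < 1 - r := by linarith
  rw [geom_sum_eq (by linarith) n]
  have h2 : (r ^ n - 1) / (r - 1) = (1 - r ^ n) / (1 - r) := by
    rw [div_eq_div_iff (by linarith) (by linarith)]; ring
  rw [h2]
  gcongr <;> nlinarith [pow_nonneg hr0 n]

private lemma combine (r1 r2 E1 P1 : ℝ) (hP1 : P1 ≠ 0) (hr2 : 1 - r2 ≠ 0) :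
    r1 * (E1 / P1) + r2 * ((r1 * E1) / (P1 * (1 - r2))) = (r1 * E1) / (P1 * (1 - r2)) := by
  field_simp
  ring

private lemma main_aux (m N k : ℕ) (hm : 1 ≤ m) (hN : 1 ≤ N) (hk : 1 ≤ k) :
    ∀ d, 1 ≤ d → ∀ M, F m N M k d ≤
      Real.exp (-((2 * (k : ℝ) + d - 2) * ((d : ℝ) - 1)) / (2 * (m : ℝ) * N)) /
        ∏ j ∈ Finset.range d, (1 - Real.exp (-((k : ℝ) + j) / ((m : ℝ) * N))) := by
  have hmN : (0 : ℝ) < (m : ℝ) * N := by positivity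
  have hrlt : ∀ j : ℕ, Real.exp (-((k : ℝ) + j) / ((m : ℝ) * N)) < 1 := by
    intro j
    rw [Real.exp_lt_one_iff]
    have hkpos : (0 : ℝ) < (k : ℝ) + j := by positivity
    exact div_neg_of_neg_of_pos (by linarith) hmN
  have hprod : ∀ d : ℕ, 0 < ∏ j ∈ Finset.range d,
      (1 - Real.exp (-((k : ℝ) + j) / ((m : ℝ) * N))) := by
    intro d
    apply Finset.prod_pos
    intro j _
    linarith [hrlt j]
  intro d
  induction d with
  | zero => omega
  | succ e ih =>
    intro _ M
    rcases Nat.eq_zero_or_pos e with rfl | he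
    · -- base case d = 1
      have hF1 : F m N M k 1 = ∑ i ∈ Finset.range (M + 1),
          (Real.exp (-((k : ℝ)) / ((m : ℝ) * N))) ^ i := by
        rw [F, Finset.powersetCard_one, Finset.sum_map]
        refine Finset.sum_congr rfl fun i _ => ?_
        rw [← Real.exp_nat_mul]
        simp only [Function.Embedding.coeFn_mk, Finset.sum_singleton, Finset.sup_singleton, id]
        congr 1
        field_simp
        ring
      rw [hF1]
      have := geom_bound (Real.exp (-((k : ℝ)) / ((m : ℝ) * N))) (Real.exp_pos _).le
        (by simpa using hrlt 0) (M + 1)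
      calc ∑ i ∈ Finset.range (M + 1), (Real.exp (-((k : ℝ)) / ((m : ℝ) * N))) ^ i
          ≤ 1 / (1 - Real.exp (-((k : ℝ)) / ((m : ℝ) * N))) := this
        _ = _ := by
            norm_num [Finset.prod_range_one]
    · -- step: d = e + 1 with e ≥ 1, write e = f + 1
      obtain ⟨f, rfl⟩ : ∃ f, e = f + 1 := ⟨e - 1, by omega⟩
      induction M with
      | zero =>
        have : F m N 0 k (f + 2) = 0 := by
          rw [F]
          have : (Finset.range 1).powersetCard (f + 2) = ∅ := by
            rw [Finset.powersetCard_eq_empty]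
            simp
          rw [this, Finset.sum_empty]
        rw [this]
        exact le_of_lt (div_pos (Real.exp_pos _) (hprod _))
      | succ M ihM =>
        rw [F_rec]
        have hb1 := ih (by omega) M
        have hb2 := ihM
        set r1 := Real.exp (-((k : ℝ) + f) / ((m : ℝ) * N)) with hr1
        set r2 := Real.exp (-((k : ℝ) + f + 1) / ((m : ℝ) * N)) with hr2
        have t1 : r1 * F m N M k (f + 1) ≤ r1 *
            (Real.exp (-((2 * (k : ℝ) + (f + 1) - 2) * ((((f : ℕ) + 1 : ℕ) : ℝ) - 1))
                / (2 * (m : ℝ) * N)) /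
              ∏ j ∈ Finset.range (f + 1), (1 - Real.exp (-((k : ℝ) + j) / ((m : ℝ) * N)))) := by
          apply mul_le_mul_of_nonneg_left _ (Real.exp_pos _).le
          convert hb1 using 4 <;> push_cast <;> rfl
        have t2 : r2 * F m N M k (f + 2) ≤ r2 *
            (Real.exp (-((2 * (k : ℝ) + (((f : ℕ) + 2 : ℕ) : ℝ) - 2) * ((((f : ℕ) + 2 : ℕ) : ℝ) - 1))
                / (2 * (m : ℝ) * N)) /
              ∏ j ∈ Finset.range (f + 2), (1 - Real.exp (-((k : ℝ) + j) / ((m : ℝ) * N)))) :=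
          mul_le_mul_of_nonneg_left hb2 (Real.exp_pos _).le
        refine le_trans (add_le_add t1 t2) (le_of_eq ?_)
        simp only [show f + 1 + 1 = f + 2 from rfl]
        have hP1 := hprod (f + 1)
        have hr2lt : r2 < 1 := by
          have := hrlt (f + 1)
          rw [hr2]
          convert this using 3
          push_cast; ring
        have hcast : (1 - Real.exp (-((k : ℝ) + ((f + 1 : ℕ) : ℝ)) / ((m : ℝ) * N)))
            = 1 - r2 := by
          rw [hr2]; congr 2; push_cast; ring
        have p2eq : (∏ j ∈ Finset.range (f + 2),
              (1 - Real.exp (-((k : ℝ) + j) / ((m : ℝ) * N))))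
            = (∏ j ∈ Finset.range (f + 1),
              (1 - Real.exp (-((k : ℝ) + j) / ((m : ℝ) * N)))) * (1 - r2) := by
          rw [Finset.prod_range_succ, hcast]
        have e2eq : Real.exp (-((2 * (k : ℝ) + ((f + 2 : ℕ) : ℝ) - 2) *
              (((f + 2 : ℕ) : ℝ) - 1)) / (2 * (m : ℝ) * N))
            = r1 * Real.exp (-((2 * (k : ℝ) + ((f : ℝ) + 1) - 2) *
              (((f + 1 : ℕ) : ℝ) - 1)) / (2 * (m : ℝ) * N)) := by
          rw [hr1, ← Real.exp_add]
          congr 1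
          push_cast
          field_simp
          ring
        rw [p2eq, e2eq]
        exact combine r1 r2 _ _ (ne_of_gt hP1) (by linarith)

/-- Upper bound: F(k,d) ≤ e^{-(2k+d-2)(d-1)/(2mN)} / ∏_{j=0}^{d-1} (1 - e^{-(k+j)/(mN)}). -/
theorem stmt_13 (m N M k d : ℕ) (hm : 1 ≤ m) (hN : 1 ≤ N) (hM : 1 ≤ M)
    (hk : 1 ≤ k) (hd : 1 ≤ d) :
    F m N M k d ≤
      Real.exp (-((2 * (k : ℝ) + d - 2) * ((d : ℝ) - 1)) / (2 * (m : ℝ) * N)) /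
        ∏ j ∈ Finset.range d, (1 - Real.exp (-((k : ℝ) + j) / ((m : ℝ) * N))) :=
  main_aux m N k hm hN hk d hd M
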